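/- Let X be an absolutely continuous nonnegative random variable with pdf f and cdf F with F(x) > 0 for all x > 0, and define the sequence of pdfs f_1 = f, f_{n+1}(x) = T_n(x)·f_n(x), where F_1 = F, T_n(x) = −log F_n(x) and F_{n+1}(x) = F_n(x)(1 + T_n(x)). Fix n ≥ 1 and suppose X_n is DLR, i.e. f_n is log-convex on (0,∞). Then X_{n+1} is DLR, i.e. f_{n+1} is log-convex on (0,∞). -/

import Mathlib

open MeasureTheory Set Filter

lemma mono_from_deriv {a b : ℝ} (hab : a ≤ b) {h h' : ℝ → ℝ}
    (hd : ∀ x ∈ Icc a b, HasDerivAt h (h' x) x)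
    (h0 : ∀ x ∈ Ioo a b, 0 ≤ h' x) : h a ≤ h b := by
  have hm : MonotoneOn h (Icc a b) := by
    apply monotoneOn_of_deriv_nonneg (convex_Icc a b)
    · exact fun x hx => (hd x hx).continuousAt.continuousWithinAt
    · intro x hx
      rw [interior_Icc] at hx
      exact ((hd x (Ioo_subset_Icc_self hx)).differentiableAt).differentiableWithinAt
    · intro x hx
      rw [interior_Icc] at hx
      rw [(hd x (Ioo_subset_Icc_self hx)).deriv]
      exact h0 x hx
  exact hm ⟨le_refl a, hab⟩ ⟨hab, le_refl b⟩ hab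

lemma convexOn_congr {s : Set ℝ} {f g : ℝ → ℝ} (hfg : EqOn f g s)
    (hf : ConvexOn ℝ s f) : ConvexOn ℝ s g := by
  refine ⟨hf.1, fun x hx y hy a b ha hb hab => ?_⟩
  have hmem : a • x + b • y ∈ s := hf.1 hx hy ha hb hab
  rw [← hfg hmem, ← hfg hx, ← hfg hy]
  exact hf.2 hx hy ha hb hab

-- Step 1: g is antitone on (0,∞)
lemma g_antitone (G g : ℝ → ℝ)
    (hG0 : ∀ x, 0 < x → 0 < G x)
    (hG1 : ∀ x, 0 < x → G x ≤ 1)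
    (hg : ∀ x, 0 < x → 0 < g x)
    (hd : ∀ x, 0 < x → HasDerivAt G (g x) x)
    (hconv : ConvexOn ℝ (Ioi 0) fun x => Real.log (g x)) :
    ∀ ⦃x y : ℝ⦄, 0 < x → x < y → g y ≤ g x := by
  intro x y hx hxy
  by_contra hgt
  push_neg at hgt
  have hy : 0 < y := hx.trans hxy
  -- g t ≥ g y for t ≥ y
  have key : ∀ t, y < t → g y ≤ g t := by
    intro t hyt
    have hs := hconv.slope_mono_adjacent (mem_Ioi.2 hx) (mem_Ioi.2 (hy.trans hyt)) hxy hyt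
    have h1 : 0 < Real.log (g y) - Real.log (g x) :=
      sub_pos.2 (Real.log_lt_log (hg x hx) hgt)
    have h2 : 0 < (Real.log (g y) - Real.log (g x)) / (y - x) :=
      div_pos h1 (sub_pos.2 hxy)
    have h3 : 0 ≤ (Real.log (g t) - Real.log (g y)) / (t - y) := le_trans h2.le hs
    have h4 : 0 ≤ Real.log (g t) - Real.log (g y) := by
      by_contra hneg
      push_neg at hneg
      have := div_neg_of_neg_of_pos hneg (sub_pos.2 hyt)
      linarith
    have := (Real.log_le_log_iff (hg y hy) (hg t (hy.trans hyt))).1 (by linarith)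
    exact this
  -- then G grows unboundedly
  set z := y + 2 / g y with hz
  have hyz : y < z :=
    lt_add_of_pos_right y (div_pos two_pos (hg y hy))
  have hcmp : G y - g y * y ≤ G z - g y * z := by
    apply mono_from_deriv hyz.le (h := fun t => G t - g y * t) (h' := fun t => g t - g y)
    · intro t ht
      have ht0 : 0 < t := lt_of_lt_of_le hy ht.1
      have hh := (hd t ht0).sub ((hasDerivAt_id t).const_mul (g y))
      simp only [mul_one] at hh
      exact hh
    · intro t ht
      exact sub_nonneg.2 (key t ht.1)
  have hGy : 0 < G y := hG0 y hy
  have hgz : g y * (z - y) = 2 := by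
    have hgy := (hg y hy).ne'
    have hq : g y * (2 / g y) = 2 := by field_simp
    rw [hz, add_sub_cancel_left]
    exact hq
  have hGz : G z ≤ 1 := hG1 z (hy.trans hyz)
  nlinarith [hcmp]


lemma hasDerivAt_expcomp (c lam a t : ℝ) :
    HasDerivAt (fun s => c * Real.exp (-(lam * (s - a))))
      (-(lam * (c * Real.exp (-(lam * (t - a)))))) t := by
  have h1 : HasDerivAt (fun s : ℝ => -(lam * (s - a))) (-lam) t := by
    have hh := (((hasDerivAt_id t).sub_const a).const_mul lam).neg
    simp only [mul_one] at hh
    exact hh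
  have h2 := (h1.exp).const_mul c
  rw [show -(lam * (c * Real.exp (-(lam * (t - a))))) =
    c * (Real.exp (-(lam * (t - a))) * -lam) by ring]
  exact h2

lemma logT_convex (G g : ℝ → ℝ)
    (hG0 : ∀ x, 0 < x → 0 < G x)
    (hG1 : ∀ x, 0 < x → G x < 1)
    (hg : ∀ x, 0 < x → 0 < g x)
    (hd : ∀ x, 0 < x → HasDerivAt G (g x) x)
    (hconv : ConvexOn ℝ (Ioi 0) fun x => Real.log (g x)) :
    ConvexOn ℝ (Ioi 0) fun x => Real.log (-Real.log (G x)) := by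
  set T : ℝ → ℝ := fun x => -Real.log (G x) with hTdef
  set v : ℝ → ℝ := fun x => g x / G x with hvdef
  have hT0 : ∀ x, 0 < x → 0 < T x := fun x hx =>
    neg_pos.2 (Real.log_neg (hG0 x hx) (hG1 x hx))
  have hv0 : ∀ x, 0 < x → 0 < v x := fun x hx => div_pos (hg x hx) (hG0 x hx)
  have hdT : ∀ x, 0 < x → HasDerivAt T (-(v x)) x := fun x hx =>
    ((hd x hx).log (hG0 x hx).ne').neg
  have hganti := g_antitone G g hG0 (fun x hx => (hG1 x hx).le) hg hd hconv
  have hGmono : ∀ ⦃x y⦄, 0 < x → x ≤ y → G x ≤ G y := by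
    intro x y hx hxy
    apply mono_from_deriv hxy (h' := g)
    · intro t ht; exact hd t (lt_of_lt_of_le hx ht.1)
    · intro t ht; exact (hg t (hx.trans ht.1)).le
  have hvanti : ∀ ⦃x y⦄, 0 < x → x ≤ y → v y ≤ v x := by
    intro x y hx hxy
    rcases eq_or_lt_of_le hxy with rfl | h
    · exact le_refl _
    exact div_le_div₀ (hg x hx).le (hganti hx h) (hG0 x hx) (hGmono hx hxy)
  have hTconv : ConvexOn ℝ (Ioi 0) T := by
    apply MonotoneOn.convexOn_of_deriv (convex_Ioi 0)
    · intro x hx; exact (hdT x hx).continuousAt.continuousWithinAt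
    · intro x hx
      rw [interior_Ioi] at hx
      exact (hdT x hx).differentiableAt.differentiableWithinAt
    · intro a ha b hb hab
      rw [interior_Ioi] at ha hb
      rw [(hdT a ha).deriv, (hdT b hb).deriv]
      exact neg_le_neg (hvanti ha hab)
  have hlogv : ConvexOn ℝ (Ioi 0) fun x => Real.log (v x) := by
    apply convexOn_congr (f := fun x => Real.log (g x) + T x)
    · intro x hx
      have hx' : (0:ℝ) < x := hx
      show Real.log (g x) + T x = Real.log (v x)
      simp only [hTdef, hvdef]
      rw [Real.log_div (hg x hx').ne' (hG0 x hx').ne']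
      ring
    · exact hconv.add hTconv
  have hvstrict : ∀ ⦃x y⦄, 0 < x → x < y → v y < v x := by
    intro x y hx hxy
    rcases lt_or_ge (v y) (v x) with h | h
    · exact h
    exfalso
    have hy := hx.trans hxy
    have key : ∀ t, y < t → v y ≤ v t := by
      intro t hyt
      have ht0 := hy.trans hyt
      have hs := hlogv.slope_mono_adjacent (mem_Ioi.2 hx) (mem_Ioi.2 ht0) hxy hyt
      have h1 : 0 ≤ Real.log (v y) - Real.log (v x) :=
        sub_nonneg.2 ((Real.log_le_log_iff (hv0 x hx) (hv0 y hy)).2 h)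
      have h2 : 0 ≤ (Real.log (v y) - Real.log (v x)) / (y - x) :=
        div_nonneg h1 (sub_pos.2 hxy).le
      have h3 := le_trans h2 hs
      have h4 : 0 ≤ Real.log (v t) - Real.log (v y) := by
        by_contra hneg
        push_neg at hneg
        have := div_neg_of_neg_of_pos hneg (sub_pos.2 hyt)
        linarith
      exact (Real.log_le_log_iff (hv0 y hy) (hv0 t ht0)).1 (by linarith)
    set z := y + (T y + 1) / v y with hz
    have hyz : y < z :=
      lt_add_of_pos_right y (div_pos (by linarith [hT0 y hy]) (hv0 y hy))
    have hcmp : -T y - v y * y ≤ -T z - v y * z := by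
      apply mono_from_deriv hyz.le (h := fun t => -T t - v y * t)
        (h' := fun t => -(-(v t)) - v y)
      · intro t ht
        have ht0 : 0 < t := lt_of_lt_of_le hy ht.1
        have hh := ((hdT t ht0).neg).sub ((hasDerivAt_id t).const_mul (v y))
        simp only [mul_one] at hh
        exact hh
      · intro t ht
        have := key t ht.1
        simp only [neg_neg]
        linarith
    have hvz : v y * (z - y) = T y + 1 := by
      have := (hv0 y hy).ne'
      have hq : v y * ((T y + 1) / v y) = T y + 1 := by field_simp
      rw [hz, add_sub_cancel_left]
      exact hq
    have := hT0 z (hy.trans hyz)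
    nlinarith [hcmp]
  -- the key ratio inequality
  have hratio : ∀ ⦃x y⦄, 0 < x → x < y → v y * T x ≤ v x * T y := by
    intro x y hx hxy
    have hy := hx.trans hxy
    set lam := (Real.log (v x) - Real.log (v y)) / (y - x) with hlam
    have hvyx : v y < v x := hvstrict hx hxy
    have hyx0 : (0:ℝ) < y - x := sub_pos.2 hxy
    have hlam0 : 0 < lam :=
      div_pos (sub_pos.2 (Real.log_lt_log (hv0 y hy) hvyx)) hyx0
    have hlamyx : lam * (y - x) = Real.log (v x) - Real.log (v y) := by
      rw [hlam, div_mul_cancel₀ _ hyx0.ne']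
    have hexp : v x * Real.exp (-(lam * (y - x))) = v y := by
      rw [hlamyx]
      rw [neg_sub, Real.exp_sub, Real.exp_log (hv0 y hy), Real.exp_log (hv0 x hx),
        ← mul_div_assoc, mul_div_cancel_left₀ _ (hv0 x hx).ne']
    -- chord bound on (x,y)
    have chord : ∀ t, x < t → t < y → v t ≤ v x * Real.exp (-(lam * (t - x))) := by
      intro t hxt hty
      have ht0 : 0 < t := hx.trans hxt
      have hs := hlogv.secant_mono_aux2 (mem_Ioi.2 hx) (mem_Ioi.2 hy) hxt hty
      have htx0 : (0:ℝ) < t - x := sub_pos.2 hxt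
      have h1 : Real.log (v t) - Real.log (v x) ≤ -lam * (t - x) := by
        rw [div_le_div_iff₀ htx0 hyx0] at hs
        have : -lam * (y - x) = Real.log (v y) - Real.log (v x) := by
          rw [neg_mul, hlamyx]; ring
        nlinarith [hs]
      have h2 : Real.log (v t) ≤ Real.log (v x) + (-(lam * (t - x))) := by linarith
      calc v t = Real.exp (Real.log (v t)) := (Real.exp_log (hv0 t ht0)).symm
        _ ≤ Real.exp (Real.log (v x) + (-(lam * (t - x)))) := Real.exp_le_exp.2 h2
        _ = v x * Real.exp (-(lam * (t - x))) := by
            rw [Real.exp_add, Real.exp_log (hv0 x hx)]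
    -- comparison (i): T x ≤ T y + (v x - v y)/lam
    have hi : T x ≤ T y + (v x - v y) / lam := by
      have hcmp : T x - v x / lam * Real.exp (-(lam * (x - x))) ≤
          T y - v x / lam * Real.exp (-(lam * (y - x))) := by
        apply mono_from_deriv hxy.le
          (h := fun t => T t - v x / lam * Real.exp (-(lam * (t - x))))
          (h' := fun t => -(v t) - -(lam * (v x / lam * Real.exp (-(lam * (t - x))))))
        · intro t ht
          have ht0 : 0 < t := lt_of_lt_of_le hx ht.1
          exact (hdT t ht0).sub (hasDerivAt_expcomp (v x / lam) lam x t)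
        · intro t ht
          have hc := chord t ht.1 ht.2
          have hq : lam * (v x / lam * Real.exp (-(lam * (t - x)))) =
              v x * Real.exp (-(lam * (t - x))) := by
            field_simp
          rw [hq]
          linarith
      have e1 : Real.exp (-(lam * (x - x))) = 1 := by simp
      have e2 : v x / lam * Real.exp (-(lam * (y - x))) = v y / lam := by
        rw [div_mul_eq_mul_div, hexp]
      rw [e1, e2, mul_one] at hcmp
      have e3 : (v x - v y) / lam = v x / lam - v y / lam := sub_div _ _ _
      linarith
    -- comparison (ii): v y / lam ≤ T y
    have hii : v y / lam ≤ T y := by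
      have hbz : ∀ z, y < z → v y / lam * (1 - Real.exp (-(lam * (z - y)))) ≤ T y := by
        intro z hyz2
        have extra : ∀ t, y < t → v y * Real.exp (-(lam * (t - y))) ≤ v t := by
          intro t hyt
          have ht0 := hy.trans hyt
          have hs := hlogv.slope_mono_adjacent (mem_Ioi.2 hx) (mem_Ioi.2 ht0) hxy hyt
          have hty0 : (0:ℝ) < t - y := sub_pos.2 hyt
          have hsl : (Real.log (v y) - Real.log (v x)) / (y - x) = -lam := by
            rw [hlam]
            field_simp
            ring
          rw [hsl, le_div_iff₀ hty0] at hs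
          have h1 : Real.log (v y) + (-(lam * (t - y))) ≤ Real.log (v t) := by nlinarith
          calc v y * Real.exp (-(lam * (t - y)))
              = Real.exp (Real.log (v y) + (-(lam * (t - y)))) := by
                rw [Real.exp_add, Real.exp_log (hv0 y hy)]
            _ ≤ Real.exp (Real.log (v t)) := Real.exp_le_exp.2 h1
            _ = v t := Real.exp_log (hv0 t ht0)
        have hcmp : v y / lam * Real.exp (-(lam * (y - y))) - T y ≤
            v y / lam * Real.exp (-(lam * (z - y))) - T z := by
          apply mono_from_deriv hyz2.le
            (h := fun t => v y / lam * Real.exp (-(lam * (t - y))) - T t)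
            (h' := fun t => -(lam * (v y / lam * Real.exp (-(lam * (t - y))))) - -(v t))
          · intro t ht
            have ht0 : 0 < t := lt_of_lt_of_le hy ht.1
            exact (hasDerivAt_expcomp (v y / lam) lam y t).sub (hdT t ht0)
          · intro t ht
            have he := extra t ht.1
            have hq : lam * (v y / lam * Real.exp (-(lam * (t - y)))) =
                v y * Real.exp (-(lam * (t - y))) := by
              field_simp
            rw [hq]
            linarith
        have hTz := hT0 z (hy.trans hyz2)
        have e1 : Real.exp (-(lam * (y - y))) = 1 := by simp
        rw [e1, mul_one] at hcmp
        have hexpand : v y / lam * (1 - Real.exp (-(lam * (z - y)))) =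
            v y / lam - v y / lam * Real.exp (-(lam * (z - y))) := by ring
        clear_value T v lam
        linarith
      have hlim : Tendsto (fun z => v y / lam * (1 - Real.exp (-(lam * (z - y))))) atTop
          (nhds (v y / lam * (1 - 0))) := by
        apply Tendsto.const_mul
        apply Tendsto.const_sub
        have h1 : Tendsto (fun z : ℝ => z - y) atTop atTop := by
          simpa [sub_eq_add_neg] using tendsto_atTop_add_const_right atTop (-y) tendsto_id
        have h2 : Tendsto (fun z : ℝ => lam * (z - y)) atTop atTop :=
          h1.const_mul_atTop hlam0
        have h3 : Tendsto (fun z : ℝ => -(lam * (z - y))) atTop atBot :=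
          tendsto_neg_atTop_atBot.comp h2
        exact Real.tendsto_exp_atBot.comp h3
      have := le_of_tendsto hlim
        (eventually_atTop.2 ⟨y + 1, fun z hzz => hbz z (by linarith)⟩)
      simpa using this
    have h2 : v y * ((v x - v y) / lam) ≤ T y * (v x - v y) := by
      have hxv : 0 ≤ v x - v y := sub_nonneg.2 hvyx.le
      calc v y * ((v x - v y) / lam) = v y / lam * (v x - v y) := by ring
        _ ≤ T y * (v x - v y) := mul_le_mul_of_nonneg_right hii hxv
    have e : v y * (T y + (v x - v y) / lam) =
        v y * T y + v y * ((v x - v y) / lam) := by ring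
    have e2 : v y * T y + T y * (v x - v y) = v x * T y := by ring
    have := mul_le_mul_of_nonneg_left hi (hv0 y hy).le
    clear_value T v lam
    linarith
  -- final convexity of log T via monotone derivative
  show ConvexOn ℝ (Ioi 0) fun x => Real.log (T x)
  apply MonotoneOn.convexOn_of_deriv (convex_Ioi 0)
  · intro x hx
    exact ((hdT x (mem_Ioi.1 hx)).log (hT0 x (mem_Ioi.1 hx)).ne').continuousAt.continuousWithinAt
  · intro x hx
    rw [interior_Ioi] at hx
    exact ((hdT x hx).log (hT0 x hx).ne').differentiableAt.differentiableWithinAt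
  · intro a ha b hb hab
    rw [interior_Ioi] at ha hb
    rw [((hdT a ha).log (hT0 a ha).ne').deriv, ((hdT b hb).log (hT0 b hb).ne').deriv]
    rcases eq_or_lt_of_le hab with rfl | h
    · exact le_refl _
    have h1 := hratio ha h
    have hTa := hT0 a ha
    have hTb := hT0 b (ha.trans h)
    rw [neg_div, neg_div, neg_le_neg_iff, div_le_div_iff₀ hTb hTa]
    exact h1

/-- Fix `n ≥ 1` and suppose `X_n` is DLR, i.e. `f_n` is log-convex on
`(0,∞)`. Then `X_{n+1}` is DLR, i.e. `f_{n+1}` is log-convex on `(0,∞)`. -/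
theorem seq_dlr_preserved
    (F f : ℝ → ℝ) (Fn fn : ℕ → ℝ → ℝ) (n : ℕ) (hn : 1 ≤ n)
    (hf : ∀ x, 0 ≤ f x)
    (hderiv : ∀ x, 0 < x → HasDerivAt F (f x) x)
    (hFmono : Monotone F)
    (hFpos : ∀ x, 0 < x → 0 < F x)
    (hFle : ∀ x, F x ≤ 1)
    (hF1 : ∀ x, Fn 1 x = F x)
    (hf1 : ∀ x, fn 1 x = f x)
    (hFrec : ∀ m, 1 ≤ m → ∀ x, Fn (m + 1) x = Fn m x * (1 + (-Real.log (Fn m x))))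
    (hfrec : ∀ m, 1 ≤ m → ∀ x, fn (m + 1) x = (-Real.log (Fn m x)) * fn m x)
    (hfnpos : ∀ x, 0 < x → 0 < fn n x)
    (hDLR : ConvexOn ℝ (Ioi 0) (fun x => Real.log (fn n x))) :
    ConvexOn ℝ (Ioi 0) (fun x => Real.log (fn (n + 1) x)) := by
  have e1 : Fn 1 = F := funext hF1
  have ef1 : fn 1 = f := funext hf1
  -- basic facts by upward induction
  have base : ∀ m, 1 ≤ m → ∀ x, 0 < x →
      0 < Fn m x ∧ Fn m x ≤ 1 ∧ HasDerivAt (Fn m) (fn m x) x ∧ 0 ≤ fn m x := by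
    intro m hm
    induction m, hm using Nat.le_induction with
    | base =>
      intro x hx
      rw [e1, ef1]
      exact ⟨hFpos x hx, hFle x, hderiv x hx, hf x⟩
    | succ m hm ih =>
      intro x hx
      obtain ⟨hpos, hle, hdm, hfm⟩ := ih x hx
      have hlog : Real.log (Fn m x) ≤ 0 := Real.log_nonpos hpos.le hle
      refine ⟨?_, ?_, ?_, ?_⟩
      · rw [hFrec m hm x]
        have h1 : (1:ℝ) ≤ 1 + -Real.log (Fn m x) := by linarith
        nlinarith
      · rw [hFrec m hm x]
        have h1 : Real.log (Fn m x)⁻¹ ≤ (Fn m x)⁻¹ - 1 :=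
          Real.log_le_sub_one_of_pos (inv_pos.2 hpos)
        rw [Real.log_inv] at h1
        have h2 : Fn m x * (1 + -Real.log (Fn m x)) ≤
            Fn m x * (1 + ((Fn m x)⁻¹ - 1)) :=
          mul_le_mul_of_nonneg_left (by linarith) hpos.le
        have h3 : Fn m x * (1 + ((Fn m x)⁻¹ - 1)) = 1 := by
          field_simp
          ring
        linarith
      · have hfun : Fn (m+1) = fun t => Fn m t * (1 + -Real.log (Fn m t)) :=
          funext (hFrec m hm)
        rw [hfun]
        have hdlog : HasDerivAt (fun t => 1 + -Real.log (Fn m t))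
            (-(fn m x / Fn m x)) x := by
          simpa using ((hdm.log hpos.ne').neg).const_add 1
        have hmul := hdm.mul hdlog
        rw [show fn (m + 1) x = fn m x * (1 + -Real.log (Fn m x)) + Fn m x * -(fn m x / Fn m x) by
          rw [hfrec m hm x]
          field_simp
          ring]
        exact hmul
      · rw [hfrec m hm x]
        exact mul_nonneg (neg_nonneg.2 hlog) hfm
  -- downward propagation of positivity
  have hstep : ∀ m, 1 ≤ m → ∀ x, 0 < x → 0 < fn (m+1) x →
      0 < fn m x ∧ 0 < -Real.log (Fn m x) := by
    intro m hm x hx hpos1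
    obtain ⟨hFp, hFl, _, hfm⟩ := base m hm x hx
    rw [hfrec m hm x] at hpos1
    have hT : 0 ≤ -Real.log (Fn m x) := neg_nonneg.2 (Real.log_nonpos hFp.le hFl)
    constructor
    · rcases hfm.lt_or_eq with h | h
      · exact h
      · rw [← h, mul_zero] at hpos1; exact absurd hpos1 (lt_irrefl 0)
    · rcases hT.lt_or_eq with h | h
      · exact h
      · rw [← h, zero_mul] at hpos1; exact absurd hpos1 (lt_irrefl 0)
  have hall : ∀ d m, 1 ≤ m → m + d = n → ∀ x, 0 < x → 0 < fn m x := by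
    intro d
    induction d with
    | zero =>
      intro m hm hmn x hx
      have : m = n := by omega
      subst this
      exact hfnpos x hx
    | succ d ih =>
      intro m hm hmn x hx
      have h1 : (m+1) + d = n := by omega
      have := ih (m+1) (by omega) h1 x hx
      exact (hstep m hm x hx this).1
  have hfpos : ∀ x, 0 < x → 0 < f x := by
    intro x hx
    have := hall (n - 1) 1 le_rfl (by omega) x hx
    rwa [hf1 x] at this
  -- F < 1 on (0,∞)
  have hFlt : ∀ x, 0 < x → F x < 1 := by
    intro x hx
    rcases (hFle x).lt_or_eq with h | h
    · exact h
    exfalso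
    have hge : ∀ t, x < t → F t = 1 := fun t ht =>
      le_antisymm (hFle t) (h ▸ hFmono ht.le)
    have hd0 : HasDerivAt F 0 (x+1) := by
      have hev : F =ᶠ[nhds (x+1)] fun _ => (1:ℝ) :=
        Filter.eventually_of_mem (Ioi_mem_nhds (by linarith : x < x + 1))
          (fun t ht => hge t ht)
      exact (hasDerivAt_const (x+1) (1:ℝ)).congr_of_eventuallyEq hev
    have := (hderiv (x+1) (by linarith)).unique hd0
    exact absurd this (ne_of_gt (hfpos (x+1) (by linarith)))
  -- Fn n < 1 on (0,∞)
  have hFnlt : ∀ x, 0 < x → Fn n x < 1 := by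
    intro x hx
    rcases Nat.lt_or_ge n 2 with h2 | h2
    · have : n = 1 := by omega
      subst this
      rw [hF1 x]
      exact hFlt x hx
    · obtain ⟨m, hm, rfl⟩ : ∃ m, 1 ≤ m ∧ m + 1 = n := ⟨n - 1, by omega, by omega⟩
      have hTpos : 0 < -Real.log (Fn m x) := (hstep m hm x hx (hfnpos x hx)).2
      have hFp := (base m hm x hx).1
      have hlt1 : Fn m x < 1 := by
        have hlog : Real.log (Fn m x) < 0 := by linarith
        calc Fn m x = Real.exp (Real.log (Fn m x)) := (Real.exp_log hFp).symm
          _ < Real.exp 0 := Real.exp_lt_exp.2 hlog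
          _ = 1 := Real.exp_zero
      rw [hFrec m hm x]
      have h1 : Real.log (Fn m x)⁻¹ < (Fn m x)⁻¹ - 1 :=
        Real.log_lt_sub_one_of_pos (inv_pos.2 hFp)
          (fun h => (ne_of_lt hlt1) (inv_eq_one.1 h))
      rw [Real.log_inv] at h1
      have h2 : Fn m x * (1 + -Real.log (Fn m x)) <
          Fn m x * (1 + ((Fn m x)⁻¹ - 1)) :=
        mul_lt_mul_of_pos_left (by linarith) hFp
      have h3 : Fn m x * (1 + ((Fn m x)⁻¹ - 1)) = 1 := by field_simp; ring
      linarith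
  -- assemble
  have hder : ∀ x, 0 < x → HasDerivAt (Fn n) (fn n x) x :=
    fun x hx => (base n hn x hx).2.2.1
  have hFnpos : ∀ x, 0 < x → 0 < Fn n x := fun x hx => (base n hn x hx).1
  have main := logT_convex (Fn n) (fn n) hFnpos hFnlt hfnpos hder hDLR
  apply convexOn_congr
    (f := fun x => Real.log (-Real.log (Fn n x)) + Real.log (fn n x)) ?_ (main.add hDLR)
  intro x hx
  have hx' : (0:ℝ) < x := hx
  have hT : 0 < -Real.log (Fn n x) :=
    neg_pos.2 (Real.log_neg (hFnpos x hx') (hFnlt x hx'))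
  show Real.log (-Real.log (Fn n x)) + Real.log (fn n x) = Real.log (fn (n+1) x)
  rw [hfrec n hn x, Real.log_mul hT.ne' (hfnpos x hx').ne']
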